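/- Let T be a complete k-ary tree of depth d with k ≥ 2. Then the minimum cardinality of a redundant locating-dominating set of T is: k+1 if d = 1; k² + k if d = 2; k³ + k² + 2 if d = 3; and for d ≥ 4 it satisfies RED:LD(T_d) = RED:LD(T_{d-3}) + k^d + k^{d-1}, where T_{d-3} is the complete k-ary tree of depth d−3. -/

import Mathlib

open scoped symmDiff

/-- A locating-dominating (LD) set: every non-detector is dominated, and
distinct non-detectors have distinct neighborhood traces on `S`. -/
def IsLDSet {V : Type*} (G : SimpleGraph V) (S : Set V) : Prop :=
  (∀ v ∉ S, (G.neighborSet v ∩ S).Nonempty) ∧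
    ∀ u ∉ S, ∀ v ∉ S, u ≠ v → G.neighborSet u ∩ S ≠ G.neighborSet v ∩ S

/-- A redundant locating-dominating (RED:LD) set. -/
def IsRedLDSet {V : Type*} (G : SimpleGraph V) (S : Set V) : Prop :=
  IsLDSet G S ∧ ∀ v ∈ S, IsLDSet G (S \ {v})

/-- A leaf is a vertex of degree 1. -/
def IsLeaf {V : Type*} (G : SimpleGraph V) (v : V) : Prop :=
  (G.neighborSet v).ncard = 1

/-- A support vertex is a vertex adjacent to a leaf. -/
def IsSupport {V : Type*} (G : SimpleGraph V) (v : V) : Prop :=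
  ∃ u, G.Adj v u ∧ IsLeaf G u
/-- Vertices of the complete k-ary tree of depth d: sequences over `Fin k`
of length at most `d` (the root is the empty sequence). -/
def KVert (k d : ℕ) : Type :=
  Σ i : Fin (d + 1), List.Vector (Fin k) i

instance (k d : ℕ) : Fintype (KVert k d) := by unfold KVert; infer_instance

/-- The complete k-ary tree of depth d: each vertex of depth `< d` has `k`
children, obtained by prepending a symbol to its sequence. -/
def karyTree (k d : ℕ) : SimpleGraph (KVert k d) where
  Adj a b := (∃ x : Fin k, a.2.toList = x :: b.2.toList) ∨
    (∃ x : Fin k, b.2.toList = x :: a.2.toList)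
  symm := ⟨by rintro a b (h | h); exacts [Or.inr h, Or.inl h]⟩
  loopless := ⟨by
    rintro a (⟨x, h⟩ | ⟨x, h⟩) <;>
      · have := congrArg List.length h
        simp at this⟩

/-- The set of cardinalities of RED:LD sets of the complete k-ary tree of depth d. -/
def redldCards (k d : ℕ) : Set ℕ :=
  {m : ℕ | ∃ S : Set (KVert k d), IsRedLDSet (karyTree k d) S ∧ S.ncard = m}


namespace KT
variable {k d : ℕ}

def lst (v : KVert k d) : List (Fin k) := v.2.toList

lemma lst_length (v : KVert k d) : (lst v).length = (v.1 : ℕ) := v.2.toList_length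

lemma ext_lst {v w : KVert k d} (h : lst v = lst w) : v = w := by
  obtain ⟨⟨i, hi⟩, l, hl⟩ := v
  obtain ⟨⟨j, hj⟩, m, hm⟩ := w
  simp only [lst, List.Vector.toList] at h
  subst h
  simp only [Fin.val_mk] at hl hm
  obtain rfl : i = j := by omega
  rfl

def lvl (v : KVert k d) : ℕ := (lst v).length

lemma lvl_le (v : KVert k d) : lvl v ≤ d := by
  have := v.1.isLt; rw [lvl, lst_length]; omega

def mk (l : List (Fin k)) (h : l.length ≤ d) : KVert k d :=
  ⟨⟨l.length, Nat.lt_succ_of_le h⟩, ⟨l, rfl⟩⟩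

@[simp] lemma lst_mk (l : List (Fin k)) (h : l.length ≤ d) : lst (mk l h) = l := rfl
@[simp] lemma lvl_mk (l : List (Fin k)) (h : l.length ≤ d) : lvl (mk l h) = l.length := rfl

def ch (v : KVert k d) : Set (KVert k d) := {w | ∃ x, lst w = x :: lst v}
def pa (v : KVert k d) : Set (KVert k d) := {w | ∃ x, lst v = x :: lst w}

lemma adj_iff {a b : KVert k d} :
    (karyTree k d).Adj a b ↔ (∃ x, lst a = x :: lst b) ∨ (∃ x, lst b = x :: lst a) :=
  Iff.rfl

lemma neighborSet_eq (v : KVert k d) :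
    (karyTree k d).neighborSet v = ch v ∪ pa v := by
  ext w
  simp only [SimpleGraph.mem_neighborSet, adj_iff, ch, pa, Set.mem_union, Set.mem_setOf_eq]
  tauto

lemma lvl_of_mem_ch {v w : KVert k d} (h : w ∈ ch v) : lvl w = lvl v + 1 := by
  obtain ⟨x, hx⟩ := h; simp [lvl, hx]

lemma lvl_of_mem_pa {v w : KVert k d} (h : w ∈ pa v) : lvl v = lvl w + 1 := by
  obtain ⟨x, hx⟩ := h; simp [lvl, hx]

lemma pa_subsing {v w w' : KVert k d} (h : w ∈ pa v) (h' : w' ∈ pa v) : w = w' := by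
  obtain ⟨x, hx⟩ := h; obtain ⟨y, hy⟩ := h'
  rw [hx] at hy
  exact ext_lst (List.cons.injEq _ _ _ _ ▸ hy |>.2)

lemma ch_disj {u v w : KVert k d} (h : w ∈ ch u) (h' : w ∈ ch v) : u = v := by
  obtain ⟨x, hx⟩ := h; obtain ⟨y, hy⟩ := h'
  rw [hx] at hy
  exact ext_lst (List.cons.injEq _ _ _ _ ▸ hy |>.2)

lemma pa_eq_empty {v : KVert k d} (h : lvl v = 0) : pa v = ∅ := by
  ext w
  simp only [pa, Set.mem_setOf_eq, Set.mem_empty_iff_false, iff_false]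
  rintro ⟨x, hx⟩
  rw [lvl, hx] at h; simp at h

def child (x : Fin k) (v : KVert k d) (h : lvl v < d) : KVert k d :=
  mk (x :: lst v) (by simpa [lvl] using h)

lemma child_mem {x : Fin k} {v : KVert k d} (h : lvl v < d) : child x v h ∈ ch v := ⟨x, rfl⟩

lemma child_inj {x y : Fin k} {v : KVert k d} (h : lvl v < d) (hxy : x ≠ y) :
    child x v h ≠ child y v h := by
  intro hc
  exact hxy (by simpa [child] using congrArg lst hc)

def par (v : KVert k d) : KVert k d :=
  mk (lst v).tail (by
    have h1 : (lst v).tail.length ≤ (lst v).length := by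
      rw [List.length_tail]; omega
    have h2 := lvl_le v
    rw [lvl] at h2; omega)

lemma pa_eq_singleton {v : KVert k d} (h : 1 ≤ lvl v) : pa v = {par v} := by
  have hne : lst v ≠ [] := by
    intro hnil; rw [lvl, hnil] at h; simp at h
  have hmem : par v ∈ pa v := by
    refine ⟨(lst v).head hne, ?_⟩
    simp only [par, lst_mk]
    exact (List.cons_head_tail hne).symm
  ext w
  constructor
  · intro hw; exact pa_subsing hw hmem
  · rintro rfl; exact hmem

lemma lvl_par {v : KVert k d} (h : 1 ≤ lvl v) : lvl (par v) + 1 = lvl v := by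
  have := lvl_of_mem_pa (show par v ∈ pa v from (pa_eq_singleton h) ▸ rfl)
  omega

lemma ch_eq_empty {v : KVert k d} (h : lvl v = d) : ch v = ∅ := by
  ext w
  simp only [ch, Set.mem_setOf_eq, Set.mem_empty_iff_false, iff_false]
  rintro ⟨x, hx⟩
  have h1 := lvl_le w
  rw [lvl, hx] at h1
  rw [lvl] at h
  simp at h1
  omega

end KT
namespace KT
variable {k d : ℕ}

def Lv (k d j : ℕ) : Set (KVert k d) := {v | lvl v = j}
def Vle (k d j : ℕ) : Set (KVert k d) := {v | lvl v ≤ j}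

noncomputable def lvEquiv (k d j : ℕ) (hj : j ≤ d) :
    (Lv k d j) ≃ List.Vector (Fin k) j where
  toFun v := ⟨lst v.1, v.2⟩
  invFun l := ⟨mk l.toList (by rw [l.toList_length]; exact hj), by
    simp [Lv, lvl, l.toList_length]⟩
  left_inv v := by
    apply Subtype.ext
    exact ext_lst rfl
  right_inv l := by
    apply List.Vector.toList_injective
    rfl

lemma ncard_Lv {j : ℕ} (hj : j ≤ d) : (Lv k d j).ncard = k ^ j := by
  rw [← Nat.card_coe_set_eq, Nat.card_congr (lvEquiv k d j hj),
    Nat.card_eq_fintype_card, card_vector]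
  simp

lemma ncard_split (S : Set (KVert k d)) (j : ℕ) :
    (S ∩ Vle k d (j + 1)).ncard = (S ∩ Lv k d (j + 1)).ncard + (S ∩ Vle k d j).ncard := by
  have : S ∩ Vle k d (j+1) = (S ∩ Lv k d (j+1)) ∪ (S ∩ Vle k d j) := by
    ext v; simp only [Set.mem_inter_iff, Set.mem_union, Vle, Lv, Set.mem_setOf_eq]
    constructor
    · rintro ⟨hv, hle⟩
      rcases Nat.eq_or_lt_of_le hle with h | h
      · exact Or.inl ⟨hv, h⟩
      · exact Or.inr ⟨hv, by omega⟩
    · rintro (⟨hv, h⟩ | ⟨hv, h⟩) <;> exact ⟨hv, by omega⟩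
  rw [this, Set.ncard_union_eq ?_ (Set.toFinite _) (Set.toFinite _)]
  rw [Set.disjoint_iff]
  rintro v ⟨⟨-, h1⟩, -, h2⟩
  simp only [Lv, Vle, Set.mem_setOf_eq] at h1 h2
  omega

lemma Vle_top (h : d ≤ j) : Vle k d j = Set.univ := by
  ext v; simp only [Vle, Set.mem_setOf_eq, Set.mem_univ, iff_true]
  exact le_trans (lvl_le v) h

lemma inter_Lv_of_subset {S : Set (KVert k d)} {j : ℕ} (h : Lv k d j ⊆ S) :
    S ∩ Lv k d j = Lv k d j := Set.inter_eq_self_of_subset_right h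

end KT
namespace KT
variable {k d : ℕ} {S : Set (KVert k d)}

lemma trace_eq (v : KVert k d) (S : Set (KVert k d)) :
    (karyTree k d).neighborSet v ∩ S = (ch v ∩ S) ∪ (pa v ∩ S) := by
  rw [neighborSet_eq, Set.union_inter_distrib_right]

/-- F1: every non-detector of a RED:LD set has at least two detector neighbors. -/
lemma two_neighbors (hS : IsRedLDSet (karyTree k d) S) {v : KVert k d} (hv : v ∉ S) :
    ∃ a ∈ (karyTree k d).neighborSet v ∩ S, ∃ b ∈ (karyTree k d).neighborSet v ∩ S, a ≠ b := by
  obtain ⟨a, ha⟩ := hS.1.1 v hv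
  have haS : a ∈ S := ha.2
  obtain ⟨b, hb⟩ := (hS.2 a haS).1 v (by simp [hv])
  refine ⟨a, ha, b, ⟨hb.1, hb.2.1⟩, ?_⟩
  intro h; subst h
  exact hb.2.2 rfl

/-- F2: every non-detector has a child detector. -/
lemma child_detector (hS : IsRedLDSet (karyTree k d) S) {v : KVert k d} (hv : v ∉ S) :
    (ch v ∩ S).Nonempty := by
  obtain ⟨a, ha, b, hb, hab⟩ := two_neighbors hS hv
  rw [trace_eq] at ha hb
  rcases ha with ha | ha
  · exact ⟨a, ha⟩
  rcases hb with hb | hb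
  · exact ⟨b, hb⟩
  exact absurd (pa_subsing ha.1 hb.1) hab

/-- F3: a detector whose parent is a non-detector has a child detector. -/
lemma child_detector_of_mem (hS : IsRedLDSet (karyTree k d) S) {v : KVert k d}
    (hv : v ∈ S) (hl : 1 ≤ lvl v) (hp : par v ∉ S) : (ch v ∩ S).Nonempty := by
  obtain ⟨a, ha⟩ := (hS.2 v hv).1 v (by simp)
  rw [trace_eq] at ha
  rcases ha with ha | ha
  · exact ⟨a, ha.1, ha.2.1⟩
  · exfalso
    rw [pa_eq_singleton hl] at ha
    have h1 : a = par v := ha.1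
    subst h1
    exact hp ha.2.1

/-- F0 (leaves): every vertex at the bottom level is a detector. -/
lemma bottom_mem (hd : 1 ≤ d) (hS : IsRedLDSet (karyTree k d) S) {v : KVert k d}
    (hv : lvl v = d) : v ∈ S := by
  by_contra hvS
  obtain ⟨c, hc⟩ := child_detector hS hvS
  rw [ch_eq_empty hv] at hc
  exact hc.1

/-- F0 (supports): every vertex at level d-1 is a detector. -/
lemma support_mem (hd : 1 ≤ d) (hk : 1 ≤ k) (hS : IsRedLDSet (karyTree k d) S)
    {v : KVert k d} (hv : lvl v + 1 = d) : v ∈ S := by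
  by_contra hvS
  have hlt : lvl v < d := by omega
  set c := child ⟨0, hk⟩ v hlt with hcdef
  have hcch : c ∈ ch v := child_mem hlt
  have hclvl : lvl c = d := by rw [lvl_of_mem_ch hcch]; omega
  have hcS : c ∈ S := bottom_mem hd hS hclvl
  -- remove c : c becomes an undominated non-detector
  obtain ⟨a, ha⟩ := (hS.2 c hcS).1 c (by simp)
  rw [trace_eq] at ha
  rcases ha with ha | ha
  · rw [ch_eq_empty hclvl] at ha; exact ha.1
  · have h1 : 1 ≤ lvl c := by omega
    rw [pa_eq_singleton h1] at ha
    have hpc : par c = v := by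
      have : v ∈ pa c := by
        obtain ⟨x, hx⟩ := hcch
        exact ⟨x, hx⟩
      rw [pa_eq_singleton h1] at this
      exact this.symm
    have := ha.2.1
    rw [ha.1, hpc] at this
    exact hvS this

lemma high_level_subset (hd : 1 ≤ d) (hk : 1 ≤ k) (hS : IsRedLDSet (karyTree k d) S)
    {v : KVert k d} (hv : d ≤ lvl v + 1) : v ∈ S := by
  have := lvl_le v
  rcases Nat.eq_or_lt_of_le hv with h | h
  · exact support_mem hd hk hS (by omega)
  · exact bottom_mem hd hS (by omega)

end KT
namespace KT
variable {k d : ℕ}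

lemma exists_child (hk : 1 ≤ k) {v : KVert k d} (h : lvl v < d) : ∃ c, c ∈ ch v :=
  ⟨child ⟨0, hk⟩ v h, child_mem h⟩

lemma exists_child_ne (hk : 2 ≤ k) {v : KVert k d} (h : lvl v < d) (z : KVert k d) :
    ∃ c ∈ ch v, c ≠ z := by
  by_cases h0 : child ⟨0, by omega⟩ v h = z
  · refine ⟨child ⟨1, by omega⟩ v h, child_mem h, ?_⟩
    rw [← h0]
    exact child_inj h (by simp [Fin.ext_iff])
  · exact ⟨child ⟨0, by omega⟩ v h, child_mem h, h0⟩

lemma exists_two_children (hk : 2 ≤ k) {v : KVert k d} (h : lvl v < d) :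
    ∃ c c', c ∈ ch v ∧ c' ∈ ch v ∧ c ≠ c' :=
  ⟨child ⟨0, by omega⟩ v h, child ⟨1, by omega⟩ v h, child_mem h, child_mem h,
    child_inj h (by simp [Fin.ext_iff])⟩

lemma root_unique {u v : KVert k d} (hu : lvl u = 0) (hv : lvl v = 0) : u = v := by
  apply ext_lst
  rw [List.length_eq_zero_iff.mp hu, List.length_eq_zero_iff.mp hv]

lemma ne_sets_of_mem {α : Type*} {A B : Set α} {x : α} (hx : x ∈ A) (hnx : x ∉ B) : A ≠ B :=
  fun h => hnx (h ▸ hx)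

lemma not_mem_diff_iff {α : Type*} {S : Set α} {z v : α} :
    v ∉ S \ {z} ↔ v = z ∨ v ∉ S := by
  simp only [Set.mem_diff, Set.mem_singleton_iff, not_and, not_not]
  tauto

lemma par_of_mem_ch {v w : KVert k d} (h : w ∈ ch v) : par w = v := by
  have h1 : 1 ≤ lvl w := by rw [lvl_of_mem_ch h]; omega
  have : v ∈ pa w := h
  rw [pa_eq_singleton h1] at this
  exact this.symm

lemma mem_pa_iff {v w : KVert k d} (h1 : 1 ≤ lvl v) : w ∈ pa v ↔ w = par v := by
  rw [pa_eq_singleton h1]; rfl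

end KT
namespace KT
variable {k d : ℕ}

lemma mem_nb_of_ch {v c : KVert k d} (h : c ∈ ch v) : c ∈ (karyTree k d).neighborSet v := by
  rw [neighborSet_eq]; exact Or.inl h

lemma mem_nb_of_pa {v p : KVert k d} (h : p ∈ pa v) : p ∈ (karyTree k d).neighborSet v := by
  rw [neighborSet_eq]; exact Or.inr h

lemma par_mem_nb {v : KVert k d} (h : 1 ≤ lvl v) : par v ∈ (karyTree k d).neighborSet v :=
  mem_nb_of_pa ((pa_eq_singleton h) ▸ rfl)

lemma not_mem_nb {v x : KVert k d} (h1 : lvl x ≠ lvl v + 1) (h2 : lvl v ≠ lvl x + 1) :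
    x ∉ (karyTree k d).neighborSet v := by
  rw [neighborSet_eq]
  rintro (h | h)
  · exact h1 (lvl_of_mem_ch h)
  · exact h2 (lvl_of_mem_pa h)

lemma mem_nb_lvl {v x : KVert k d} (h : x ∈ (karyTree k d).neighborSet v) :
    lvl x = lvl v + 1 ∨ lvl v = lvl x + 1 := by
  rw [neighborSet_eq] at h
  rcases h with h | h
  · exact Or.inl (lvl_of_mem_ch h)
  · exact Or.inr (lvl_of_mem_pa h)

end KT
namespace KT
variable {k d : ℕ}

lemma child_not_mem_nb {u v c : KVert k d} (hc : c ∈ ch u) (huv : u ≠ v)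
    (hlvl : lvl v ≤ lvl u + 1) : c ∉ (karyTree k d).neighborSet v := by
  rw [neighborSet_eq]
  rintro (h | h)
  · exact huv (ch_disj hc h)
  · have h1 := lvl_of_mem_ch hc
    have h2 := lvl_of_mem_pa h
    omega

lemma trace_ne_of_children {u v z : KVert k d} {T : Set (KVert k d)} (hk : 2 ≤ k)
    (hlt : lvl u < d) (hlvl : lvl v ≤ lvl u + 1) (huv : u ≠ v)
    (hT : ∀ c ∈ ch u, c ≠ z → c ∈ T) :
    (karyTree k d).neighborSet u ∩ T ≠ (karyTree k d).neighborSet v ∩ T := by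
  obtain ⟨c, hc, hcz⟩ := exists_child_ne hk hlt z
  exact ne_sets_of_mem ⟨mem_nb_of_ch hc, hT c hc hcz⟩
    (fun hmem => child_not_mem_nb hc huv hlvl hmem.1)

lemma trace_nonempty_of_ch {v z : KVert k d} {T : Set (KVert k d)} (hk : 2 ≤ k)
    (hlt : lvl v < d) (hT : ∀ c ∈ ch v, c ≠ z → c ∈ T) :
    ((karyTree k d).neighborSet v ∩ T).Nonempty := by
  obtain ⟨c, hc, hcz⟩ := exists_child_ne hk hlt z
  exact ⟨c, mem_nb_of_ch hc, hT c hc hcz⟩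

end KT
namespace KT
variable {k : ℕ}

lemma univ_redld (hd : 1 ≤ d) (hk : 1 ≤ k) :
    IsRedLDSet (karyTree k d) (Set.univ : Set (KVert k d)) := by
  constructor
  · exact ⟨fun v hv => absurd (Set.mem_univ v) hv,
      fun u hu v hv h => absurd (Set.mem_univ u) hu⟩
  · intro z hz
    constructor
    · intro v hv
      have hvz : v = z := by
        rcases not_mem_diff_iff.mp hv with h | h
        · exact h
        · exact absurd (Set.mem_univ v) h
      subst hvz
      -- v has some neighbor w ≠ v
      have : ∃ w, w ∈ (karyTree k d).neighborSet v := by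
        by_cases h0 : lvl v < d
        · obtain ⟨c, hc⟩ := exists_child hk h0
          exact ⟨c, by rw [neighborSet_eq]; exact Or.inl hc⟩
        · have h1 : 1 ≤ lvl v := by have := lvl_le v; omega
          exact ⟨par v, by rw [neighborSet_eq, pa_eq_singleton h1]; exact Or.inr rfl⟩
      obtain ⟨w, hw⟩ := this
      refine ⟨w, hw, Set.mem_univ w, ?_⟩
      simp only [Set.mem_singleton_iff]
      intro hwv
      subst hwv
      exact (karyTree k d).loopless.irrefl _ hw
    · intro u hu v hv huv
      exfalso
      rcases not_mem_diff_iff.mp hu with h | h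
      · rcases not_mem_diff_iff.mp hv with h' | h'
        · exact huv (h.trans h'.symm)
        · exact h' (Set.mem_univ v)
      · exact h (Set.mem_univ u)

lemma ncard_univ_d1 (hk : 1 ≤ k) : (Set.univ : Set (KVert k 1)).ncard = k + 1 := by
  have h1 : (Set.univ : Set (KVert k 1)) = Set.univ ∩ Vle k 1 1 := by
    rw [Vle_top le_rfl]; simp
  rw [h1, ncard_split]
  have h2 : Set.univ ∩ Lv k 1 1 = Lv k 1 1 := Set.univ_inter _
  have h3 : Set.univ ∩ Vle k 1 0 = Lv k 1 0 := by
    rw [Set.univ_inter]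
    ext v; simp only [Vle, Lv, Set.mem_setOf_eq]; omega
  rw [h2, h3, ncard_Lv (by omega), ncard_Lv (by omega)]
  simp

lemma case_d1 (hk : 2 ≤ k) : IsLeast (redldCards k 1) (k + 1) := by
  constructor
  · exact ⟨Set.univ, univ_redld le_rfl (by omega), ncard_univ_d1 (by omega)⟩
  · rintro m ⟨S, hS, rfl⟩
    have hSuniv : S = Set.univ := by
      apply Set.eq_univ_of_forall
      intro v
      exact high_level_subset le_rfl (by omega) hS (by have := lvl_le v; omega)
    rw [hSuniv, ncard_univ_d1 (by omega)]

end KT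
namespace KT
variable {k : ℕ}

def S2 (k : ℕ) : Set (KVert k 2) := {v | 1 ≤ lvl v}

lemma redld_d2 (hk : 2 ≤ k) : IsRedLDSet (karyTree k 2) (S2 k) := by
  have hk1 : 1 ≤ k := by omega
  constructor
  · constructor
    · intro v hv
      have hv0 : lvl v = 0 := by simpa [S2] using hv
      obtain ⟨c, hc⟩ := exists_child hk1 (by omega : lvl v < 2)
      exact ⟨c, mem_nb_of_ch hc, by simp [S2, lvl_of_mem_ch hc]⟩
    · intro u hu v hv huv
      exact absurd (root_unique (by simpa [S2] using hu) (by simpa [S2] using hv)) huv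
  · intro z hz
    have hz1 : 1 ≤ lvl z := hz
    have hz2 : lvl z ≤ 2 := lvl_le z
    have hdom : ∀ v, v ∉ S2 k \ {z} →
        ((karyTree k 2).neighborSet v ∩ (S2 k \ {z})).Nonempty := by
      intro v hv
      rcases not_mem_diff_iff.mp hv with rfl | hv0
      · -- v = z
        by_cases hl : lvl v = 1
        · obtain ⟨c, hc⟩ := exists_child hk1 (by omega : lvl v < 2)
          have hcl : lvl c = 2 := by rw [lvl_of_mem_ch hc]; omega
          exact ⟨c, mem_nb_of_ch hc, ⟨by simp [S2, hcl], by
            simp only [Set.mem_singleton_iff]; intro h; rw [h] at hcl; omega⟩⟩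
        · have hl2 : lvl v = 2 := by omega
          have hp1 : lvl (par v) = 1 := by have := lvl_par (by omega : 1 ≤ lvl v); omega
          exact ⟨par v, par_mem_nb (by omega), ⟨by simp [S2, hp1], by
            simp only [Set.mem_singleton_iff]; intro h; rw [h] at hp1; omega⟩⟩
      · -- lvl v = 0
        have hv00 : lvl v = 0 := by simpa [S2] using hv0
        obtain ⟨c, hc, hcz⟩ := exists_child_ne hk (by omega : lvl v < 2) z
        have hcl : lvl c = 1 := by rw [lvl_of_mem_ch hc]; omega
        exact ⟨c, mem_nb_of_ch hc, ⟨by simp [S2, hcl], by simpa using hcz⟩⟩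
    refine ⟨hdom, ?_⟩
    -- distinctness
    have key : ∀ v, lvl v = 0 →
        (karyTree k 2).neighborSet v ∩ (S2 k \ {z}) ≠
        (karyTree k 2).neighborSet z ∩ (S2 k \ {z}) := by
      intro v hv0
      by_cases hl : lvl z = 1
      · obtain ⟨c, hc, hcz⟩ := exists_child_ne hk (by omega : lvl v < 2) z
        have hcl : lvl c = 1 := by rw [lvl_of_mem_ch hc]; omega
        apply ne_sets_of_mem (x := c)
        · exact ⟨mem_nb_of_ch hc, by simp [S2, hcl], by simpa using hcz⟩
        · intro hmem
          exact not_mem_nb (by omega) (by omega) hmem.1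
      · have hl2 : lvl z = 2 := by omega
        obtain ⟨c, c', hc, hc', hcc⟩ := exists_two_children hk (by omega : lvl v < 2)
        have hcl : lvl c = 1 := by rw [lvl_of_mem_ch hc]; omega
        have hcl' : lvl c' = 1 := by rw [lvl_of_mem_ch hc']; omega
        intro heq
        have hmc : c ∈ (karyTree k 2).neighborSet z ∩ (S2 k \ {z}) := by
          rw [← heq]
          exact ⟨mem_nb_of_ch hc, by simp [S2, hcl], by
            simp only [Set.mem_singleton_iff]; intro h; rw [h] at hcl; omega⟩
        have hmc' : c' ∈ (karyTree k 2).neighborSet z ∩ (S2 k \ {z}) := by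
          rw [← heq]
          exact ⟨mem_nb_of_ch hc', by simp [S2, hcl'], by
            simp only [Set.mem_singleton_iff]; intro h; rw [h] at hcl'; omega⟩
        -- both neighbors of z at level 1, z at level 2: both parents of z
        have h1 : c ∈ pa z := by
          have := mem_nb_lvl hmc.1
          rw [neighborSet_eq] at hmc
          rcases hmc.1 with h | h
          · exfalso; have := lvl_of_mem_ch h; omega
          · exact h
        have h1' : c' ∈ pa z := by
          rw [neighborSet_eq] at hmc'
          rcases hmc'.1 with h | h
          · exfalso; have := lvl_of_mem_ch h; omega
          · exact h
        exact hcc (pa_subsing h1 h1')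
    intro u hu v hv huv
    rcases not_mem_diff_iff.mp hu with rfl | hu0
    · rcases not_mem_diff_iff.mp hv with rfl | hv0
      · exact absurd rfl huv
      · exact (key v (by simpa [S2] using hv0)).symm
    · rcases not_mem_diff_iff.mp hv with rfl | hv0
      · exact key u (by simpa [S2] using hu0)
      · exact absurd (root_unique (by simpa [S2] using hu0) (by simpa [S2] using hv0)) huv

lemma ncard_S2 (hk : 1 ≤ k) : (S2 k).ncard = k ^ 2 + k := by
  have h1 : S2 k = S2 k ∩ Vle k 2 2 := by rw [Vle_top le_rfl]; simp
  have h2 : S2 k ∩ Vle k 2 1 = S2 k ∩ Lv k 2 1 := by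
    ext v; simp only [S2, Vle, Lv, Set.mem_inter_iff, Set.mem_setOf_eq]; omega
  have h3 : S2 k ∩ Lv k 2 2 = Lv k 2 2 := by
    ext v; simp only [S2, Lv, Set.mem_inter_iff, Set.mem_setOf_eq]; omega
  have h4 : S2 k ∩ Lv k 2 1 = Lv k 2 1 := by
    ext v; simp only [S2, Lv, Set.mem_inter_iff, Set.mem_setOf_eq]; omega
  rw [h1, ncard_split (S2 k) 1, h2, h3, h4,
    ncard_Lv (by omega), ncard_Lv (by omega)]
  ring

lemma case_d2 (hk : 2 ≤ k) : IsLeast (redldCards k 2) (k ^ 2 + k) := by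
  constructor
  · exact ⟨S2 k, redld_d2 hk, ncard_S2 (by omega)⟩
  · rintro m ⟨S, hS, rfl⟩
    have hsub : S2 k ⊆ S := by
      intro v hv
      exact high_level_subset (by omega) (by omega) hS (by
        have : 1 ≤ lvl v := hv; omega)
    calc k ^ 2 + k = (S2 k).ncard := (ncard_S2 (by omega)).symm
    _ ≤ S.ncard := Set.ncard_le_ncard hsub (Set.toFinite _)

end KT
namespace KT
variable {k : ℕ}

def rt (k d : ℕ) : KVert k d := mk [] (by simp)
def w0 (k : ℕ) (hk : 0 < k) : KVert k 3 := mk [⟨0, hk⟩] (by simp)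

@[simp] lemma lvl_rt : lvl (rt k d) = 0 := rfl
@[simp] lemma lvl_w0 (hk : 0 < k) : lvl (w0 k hk) = 1 := rfl

def S3 (k : ℕ) (hk : 0 < k) : Set (KVert k 3) :=
  {v | 2 ≤ lvl v ∨ lvl v = 0 ∨ lst v = [⟨0, hk⟩]}

lemma mem_S3 {hk : 0 < k} {v : KVert k 3} :
    v ∈ S3 k hk ↔ 2 ≤ lvl v ∨ lvl v = 0 ∨ lst v = [⟨0, hk⟩] := Iff.rfl

lemma nondet_S3 {hk : 0 < k} {v : KVert k 3} (hv : v ∉ S3 k hk) :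
    lvl v = 1 ∧ v ≠ w0 k hk := by
  rw [mem_S3] at hv
  push_neg at hv
  refine ⟨by omega, fun h => hv.2.2 (by rw [h]; rfl)⟩

lemma lvl1_mem_S3 {hk : 0 < k} {v : KVert k 3} (h : 2 ≤ lvl v) : v ∈ S3 k hk := Or.inl h

lemma rt_mem_S3 {hk : 0 < k} : rt k 3 ∈ S3 k hk := Or.inr (Or.inl rfl)
lemma w0_mem_S3 {hk : 0 < k} : w0 k hk ∈ S3 k hk := Or.inr (Or.inr rfl)

lemma par_lvl1_eq_rt {v : KVert k 3} (h : lvl v = 1) : par v = rt k 3 :=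
  root_unique (by have := lvl_par (by omega : 1 ≤ lvl v); omega) rfl

lemma redld_d3 (hk : 2 ≤ k) : IsRedLDSet (karyTree k 3) (S3 k (by omega)) := by
  have hk0 : 0 < k := by omega
  set S := S3 k hk0 with hSdef
  constructor
  · constructor
    · intro v hv
      obtain ⟨hv1, -⟩ := nondet_S3 hv
      exact trace_nonempty_of_ch (z := v) hk (by omega)
        (fun c hc _ => lvl1_mem_S3 (by rw [lvl_of_mem_ch hc]; omega))
    · intro u hu v hv huv
      obtain ⟨hu1, -⟩ := nondet_S3 hu
      obtain ⟨hv1, -⟩ := nondet_S3 hv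
      exact trace_ne_of_children (z := u) hk (by omega) (by omega) huv
        (fun c hc _ => lvl1_mem_S3 (by rw [lvl_of_mem_ch hc]; omega))
  · intro z hz
    have hzS : z ∈ S := hz
    -- characterize non-detectors of S \ {z}
    have hnd : ∀ v, v ∉ S \ {z} → v = z ∨ (lvl v = 1 ∧ v ≠ w0 k hk0) := by
      intro v hv
      rcases not_mem_diff_iff.mp hv with h | h
      · exact Or.inl h
      · exact Or.inr (nondet_S3 h)
    -- helper: membership in S \ {z}
    have hmem' : ∀ x, x ∈ S → x ≠ z → x ∈ S \ {z} := fun x h1 h2 => ⟨h1, h2⟩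
    rcases (mem_S3.mp hzS) with hz2 | hz0 | hzw0
    · -- lvl z ≥ 2
      constructor
      · intro v hv
        rcases hnd v hv with rfl | ⟨hv1, -⟩
        · -- v = z : use child (if lvl z = 2) or parent (if lvl z = 3)
          by_cases h3 : lvl v = 3
          · refine ⟨par v, par_mem_nb (by omega), hmem' _ (lvl1_mem_S3 (by
                have := lvl_par (show 1 ≤ lvl v by omega); omega)) ?_⟩
            intro h; have := lvl_par (show 1 ≤ lvl v by omega); rw [h] at this; omega
          · exact trace_nonempty_of_ch (z := v) hk (by have := lvl_le v; omega)
              (fun c hc hcv => hmem' _ (lvl1_mem_S3 (by rw [lvl_of_mem_ch hc]; omega))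
                (fun h => by rw [h] at hc; exact hcv (by
                  exfalso; have := lvl_of_mem_ch hc; omega)))
        · -- lvl v = 1 : root is in trace
          refine ⟨par v, par_mem_nb (by omega), hmem' _ ?_ ?_⟩
          · rw [par_lvl1_eq_rt hv1]; exact rt_mem_S3
          · rw [par_lvl1_eq_rt hv1]; intro h; rw [← h] at hz2; simp at hz2
      · intro u hu v hv huv
        have key : ∀ a b, a ∉ S \ {z} → b ∉ S \ {z} → a ≠ b → lvl a = 1 → a ≠ w0 k hk0 →
            (karyTree k 3).neighborSet a ∩ (S \ {z}) ≠
            (karyTree k 3).neighborSet b ∩ (S \ {z}) := by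
          intro a b ha hb hab ha1 haw
          rcases hnd b hb with rfl | ⟨hb1, -⟩
          · -- b = z : root ∈ trace a, root ∉ N b
            apply ne_sets_of_mem (x := rt k 3)
            · refine ⟨?_, hmem' _ rt_mem_S3 (fun h => by rw [← h] at hz2; simp at hz2)⟩
              have := par_lvl1_eq_rt ha1
              rw [← this]; exact par_mem_nb (by omega)
            · intro hmem
              rcases mem_nb_lvl hmem.1 with h | h <;> simp [lvl_rt] at h <;> omega
          · exact trace_ne_of_children (z := z) hk (by omega) (by omega) hab
              (fun c hc hcz => hmem' _ (lvl1_mem_S3 (by rw [lvl_of_mem_ch hc]; omega)) hcz)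
        rcases hnd u hu with rfl | ⟨hu1, huw⟩
        · rcases hnd v hv with rfl | ⟨hv1, hvw⟩
          · exact absurd rfl huv
          · exact (key v u hv hu huv.symm hv1 hvw).symm
        · exact key u v hu hv huv hu1 huw
    · -- z = root
      have hzrt : z = rt k 3 := root_unique hz0 rfl
      subst hzrt
      constructor
      · intro v hv
        rcases hnd v hv with rfl | ⟨hv1, -⟩
        · -- v = root: w0 is a child of root in S'
          refine ⟨w0 k hk0, mem_nb_of_ch ⟨⟨0, hk0⟩, rfl⟩, hmem' _ w0_mem_S3 ?_⟩
          intro h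
          have := congrArg lvl h
          simp [lvl_w0 hk0] at this
        · refine trace_nonempty_of_ch (z := rt k 3) hk (by omega)
            (fun c hc _ => hmem' _ (lvl1_mem_S3 (by rw [lvl_of_mem_ch hc]; omega)) ?_)
          intro h
          have h2 := lvl_of_mem_ch hc
          rw [h] at h2
          rw [lvl_rt] at h2
          omega
      · intro u hu v hv huv
        have key : ∀ a b, a ∉ S \ {rt k 3} → b ∉ S \ {rt k 3} → a ≠ b → lvl a = 1 →
            (karyTree k 3).neighborSet a ∩ (S \ {rt k 3}) ≠
            (karyTree k 3).neighborSet b ∩ (S \ {rt k 3}) := by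
          intro a b ha hb hab ha1
          have hchS : ∀ c ∈ ch a, c ≠ rt k 3 → c ∈ S \ {rt k 3} :=
            fun c hc hcr => hmem' _ (lvl1_mem_S3 (by rw [lvl_of_mem_ch hc]; omega)) hcr
          rcases hnd b hb with rfl | ⟨hb1, -⟩
          · -- b = root, a lvl 1: child of a at lvl 2 not neighbor of root
            obtain ⟨c, hc, hcz⟩ := exists_child_ne hk (show lvl a < 3 by omega) (rt k 3)
            apply ne_sets_of_mem (x := c)
            · exact ⟨mem_nb_of_ch hc, hchS c hc hcz⟩
            · intro hmem
              rcases mem_nb_lvl hmem.1 with h | h <;>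
                rw [lvl_of_mem_ch hc] at h <;> simp [lvl_rt] at h <;> omega
          · exact trace_ne_of_children (z := rt k 3) hk (by omega) (by omega) hab hchS
        rcases hnd u hu with rfl | ⟨hu1, -⟩
        · rcases hnd v hv with rfl | ⟨hv1, -⟩
          · exact absurd rfl huv
          · exact (key v (rt k 3) hv hu huv.symm hv1).symm
        · exact key u v hu hv huv hu1
    · -- z = w0
      have hz1 : lvl z = 1 := by rw [lvl, hzw0]; rfl
      constructor
      · intro v hv
        have hv1 : lvl v = 1 := by
          rcases hnd v hv with rfl | ⟨h, -⟩
          · exact hz1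
          · exact h
        exact trace_nonempty_of_ch (z := z) hk (by omega)
          (fun c hc hcz => hmem' _ (lvl1_mem_S3 (by rw [lvl_of_mem_ch hc]; omega)) hcz)
      · intro u hu v hv huv
        have hu1 : lvl u = 1 := by
          rcases hnd u hu with rfl | ⟨h, -⟩; exacts [hz1, h]
        have hv1 : lvl v = 1 := by
          rcases hnd v hv with rfl | ⟨h, -⟩; exacts [hz1, h]
        exact trace_ne_of_children (z := z) hk (by omega) (by omega) huv
          (fun c hc hcz => hmem' _ (lvl1_mem_S3 (by rw [lvl_of_mem_ch hc]; omega)) hcz)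

end KT
namespace KT
variable {k : ℕ}

lemma ncard_S3 (hk : 0 < k) : (S3 k hk).ncard = k ^ 3 + k ^ 2 + 2 := by
  have h1 : S3 k hk = S3 k hk ∩ Vle k 3 3 := by rw [Vle_top le_rfl]; simp
  have h3 : S3 k hk ∩ Lv k 3 3 = Lv k 3 3 := by
    ext v; simp only [Lv, Set.mem_inter_iff, Set.mem_setOf_eq, mem_S3, S3]
    constructor
    · exact fun h => h.2
    · intro h; exact ⟨Or.inl (by omega), h⟩
  have h2 : S3 k hk ∩ Lv k 3 2 = Lv k 3 2 := by
    ext v; simp only [Lv, Set.mem_inter_iff, Set.mem_setOf_eq, mem_S3, S3]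
    constructor
    · exact fun h => h.2
    · intro h; exact ⟨Or.inl (by omega), h⟩
  have h0 : S3 k hk ∩ Vle k 3 1 = {rt k 3, w0 k hk} := by
    ext v
    simp only [Set.mem_inter_iff, Vle, Set.mem_setOf_eq, Set.mem_insert_iff,
      Set.mem_singleton_iff, S3]
    constructor
    · rintro ⟨h1 | h1 | h1, h2⟩
      · omega
      · exact Or.inl (root_unique h1 rfl)
      · exact Or.inr (ext_lst h1)
    · rintro (rfl | rfl)
      · exact ⟨Or.inr (Or.inl rfl), by simp [lvl_rt]⟩
      · exact ⟨Or.inr (Or.inr rfl), by rw [lvl_w0 hk]⟩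
  have hpair : ({rt k 3, w0 k hk} : Set (KVert k 3)).ncard = 2 := by
    apply Set.ncard_pair
    intro h
    have := congrArg lvl h
    rw [lvl_rt, lvl_w0 hk] at this
    omega
  rw [h1, ncard_split (S3 k hk) 2, ncard_split (S3 k hk) 1, h3, h2, h0,
    ncard_Lv (by omega), ncard_Lv (by omega), hpair]
  omega

lemma lower_d3 (hk : 2 ≤ k) {S : Set (KVert k 3)} (hS : IsRedLDSet (karyTree k 3) S) :
    k ^ 3 + k ^ 2 + 2 ≤ S.ncard := by
  have hLv3 : S ∩ Lv k 3 3 = Lv k 3 3 := by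
    apply Set.inter_eq_self_of_subset_right
    intro v hv
    exact bottom_mem (by omega) hS hv
  have hLv2 : S ∩ Lv k 3 2 = Lv k 3 2 := by
    apply Set.inter_eq_self_of_subset_right
    intro v hv
    exact support_mem (by omega) (by omega) hS (by have : lvl v = 2 := hv; omega)
  have hVle1 : 2 ≤ (S ∩ Vle k 3 1).ncard := by
    by_contra hcon
    push_neg at hcon
    have hone : ∀ a ∈ S ∩ Vle k 3 1, ∀ b ∈ S ∩ Vle k 3 1, a = b :=
      (Set.ncard_le_one (Set.toFinite _)).mp (by omega)
    have hnb_lvl : ∀ a, a ∈ (karyTree k 3).neighborSet (rt k 3) → a ∈ Vle k 3 1 := by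
      intro a ha
      simp only [Vle, Set.mem_setOf_eq]
      rcases mem_nb_lvl ha with h | h <;> rw [lvl_rt] at h <;> omega
    rcases Set.eq_empty_or_nonempty (S ∩ Vle k 3 1) with hemp | ⟨z, hzmem⟩
    · have hrS : rt k 3 ∉ S := by
        intro h
        exact absurd (Set.mem_inter h (by simp [Vle, lvl_rt])) (hemp ▸ Set.notMem_empty _)
      obtain ⟨a, haN, haS⟩ := hS.1.1 (rt k 3) hrS
      exact absurd (Set.mem_inter haS (hnb_lvl a haN)) (hemp ▸ Set.notMem_empty _)
    · have hzS : z ∈ S := hzmem.1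
      have hrS : rt k 3 ∉ S \ {z} := by
        intro ⟨h1, h2⟩
        exact h2 (hone _ (Set.mem_inter h1 (by simp [Vle, lvl_rt])) _ hzmem)
      obtain ⟨a, haN, haS⟩ := (hS.2 z hzS).1 (rt k 3) hrS
      exact haS.2 (hone _ (Set.mem_inter haS.1 (hnb_lvl a haN)) _ hzmem)
  have hs1 : S = S ∩ Vle k 3 3 := by rw [Vle_top le_rfl]; simp
  calc k ^ 3 + k ^ 2 + 2
      ≤ (S ∩ Lv k 3 3).ncard + ((S ∩ Lv k 3 2).ncard + (S ∩ Vle k 3 1).ncard) := by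
        rw [hLv3, hLv2, ncard_Lv (by omega), ncard_Lv (by omega)]; omega
    _ = (S ∩ Vle k 3 3).ncard := by rw [ncard_split S 2, ncard_split S 1]
    _ = S.ncard := by rw [← hs1]

lemma case_d3 (hk : 2 ≤ k) : IsLeast (redldCards k 3) (k ^ 3 + k ^ 2 + 2) := by
  constructor
  · exact ⟨S3 k (by omega), redld_d3 hk, ncard_S3 (by omega)⟩
  · rintro m ⟨S, hS, rfl⟩
    exact lower_d3 hk hS

end KT
namespace KT
variable {k e : ℕ}

def upT (w : KVert k (e + 1)) : KVert k (e + 4) :=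
  mk (lst w) (le_trans (lvl_le w) (by omega))

@[simp] lemma lst_upT (w : KVert k (e + 1)) : lst (upT w) = lst w := rfl
@[simp] lemma lvl_upT (w : KVert k (e + 1)) : lvl (upT w) = lvl w := rfl

lemma upT_inj {w w' : KVert k (e + 1)} (h : upT w = upT w') : w = w' :=
  ext_lst (by have := congrArg lst h; simpa using this)

lemma nb_transfer {w w' : KVert k (e + 1)} :
    upT w' ∈ (karyTree k (e + 4)).neighborSet (upT w) ↔
      w' ∈ (karyTree k (e + 1)).neighborSet w := Iff.rfl

lemma exists_dn {a : KVert k (e + 4)} (h : lvl a ≤ e + 1) :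
    ∃ w : KVert k (e + 1), upT w = a := ⟨mk (lst a) h, ext_lst rfl⟩

/-- The pulled-back set on the shallower tree. -/
def ES (S₀ : Set (KVert k (e + 4))) : Set (KVert k (e + 1)) :=
  {w | e ≤ lvl w ∨ upT w ∈ S₀}

lemma mem_ES {S₀ : Set (KVert k (e + 4))} {w : KVert k (e + 1)} :
    w ∈ ES S₀ ↔ e ≤ lvl w ∨ upT w ∈ S₀ := Iff.rfl

end KT
namespace KT
variable {k e : ℕ}

/-- Domination for low-level non-detectors. -/
lemma nondet_dom (hk : 2 ≤ k) {S₀ : Set (KVert k (e + 4))}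
    (hLD : IsLDSet (karyTree k (e + 4)) S₀)
    {T : Set (KVert k (e + 1))} {z : KVert k (e + 1)}
    (hT : ∀ w', lvl w' < e → upT w' ∈ S₀ → w' ∈ T)
    (hTe : ∀ c, lvl c = e → c ≠ z → c ∈ T)
    {w : KVert k (e + 1)} (hw1 : lvl w < e) (hw2 : upT w ∉ S₀) :
    ((karyTree k (e + 1)).neighborSet w ∩ T).Nonempty := by
  by_cases hA : lvl w + 1 = e
  · exact trace_nonempty_of_ch hk (by omega)
      (fun c hc hcz => hTe c (by rw [lvl_of_mem_ch hc]; omega) hcz)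
  · obtain ⟨a, haN, haS⟩ := hLD.1 (upT w) hw2
    have hal : lvl a < e := by
      rcases mem_nb_lvl haN with h | h <;> rw [lvl_upT] at h <;> omega
    obtain ⟨w', rfl⟩ := exists_dn (show lvl a ≤ e + 1 by omega)
    rw [lvl_upT] at hal
    exact ⟨w', nb_transfer.mp haN, hT w' hal haS⟩

/-- B-B one-sided trace inclusion transfer. -/
lemma bb_incl {S₀ : Set (KVert k (e + 4))}
    {T : Set (KVert k (e + 1))}
    (hT : ∀ w', lvl w' < e → (w' ∈ T ↔ upT w' ∈ S₀))
    {u v : KVert k (e + 1)} (hu : lvl u + 1 < e) (hv : lvl v + 1 < e)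
    (heq : (karyTree k (e + 1)).neighborSet u ∩ T =
      (karyTree k (e + 1)).neighborSet v ∩ T) :
    ∀ a, a ∈ (karyTree k (e + 4)).neighborSet (upT u) ∩ S₀ →
      a ∈ (karyTree k (e + 4)).neighborSet (upT v) ∩ S₀ := by
  rintro a ⟨haN, haS⟩
  have hal : lvl a < e := by
    rcases mem_nb_lvl haN with h | h <;> rw [lvl_upT] at h <;> omega
  obtain ⟨w', rfl⟩ := exists_dn (show lvl a ≤ e + 1 by omega)
  rw [lvl_upT] at hal
  have h1 : w' ∈ (karyTree k (e + 1)).neighborSet u ∩ T :=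
    ⟨nb_transfer.mp haN, (hT w' hal).mpr haS⟩
  rw [heq] at h1
  exact ⟨nb_transfer.mpr h1.1, haS⟩

/-- Distinctness of traces of two low-level non-detectors. -/
lemma nondet_distinct (hk : 2 ≤ k) {S₀ : Set (KVert k (e + 4))}
    (hLD : IsLDSet (karyTree k (e + 4)) S₀)
    {T : Set (KVert k (e + 1))} {z : KVert k (e + 1)}
    (hT : ∀ w', lvl w' < e → (w' ∈ T ↔ upT w' ∈ S₀))
    (hTe : ∀ c, lvl c = e → c ≠ z → c ∈ T)
    {u v : KVert k (e + 1)} (hu1 : lvl u < e) (hu2 : upT u ∉ S₀)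
    (hv1 : lvl v < e) (hv2 : upT v ∉ S₀) (huv : u ≠ v) :
    (karyTree k (e + 1)).neighborSet u ∩ T ≠ (karyTree k (e + 1)).neighborSet v ∩ T := by
  by_cases hA : lvl u + 1 = e
  · exact trace_ne_of_children (z := z) hk (by omega) (by omega) huv
      (fun c hc hcz => hTe c (by rw [lvl_of_mem_ch hc]; omega) hcz)
  · by_cases hB : lvl v + 1 = e
    · exact (trace_ne_of_children (z := z) hk (by omega) (by omega) huv.symm
        (fun c hc hcz => hTe c (by rw [lvl_of_mem_ch hc]; omega) hcz)).symm
    · intro heq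
      exact hLD.2 (upT u) hu2 (upT v) hv2 (fun h => huv (upT_inj h))
        (Set.ext fun a => ⟨bb_incl hT (by omega) (by omega) heq a,
          bb_incl hT (by omega) (by omega) heq.symm a⟩)

/-- Non-detector characterization for `ES S₀ \ {z}` style sets. -/
lemma core_lower (hk : 2 ≤ k) {S₀ : Set (KVert k (e + 4))}
    (hLD : IsLDSet (karyTree k (e + 4)) S₀) :
    IsLDSet (karyTree k (e + 1)) (ES S₀) := by
  have hnd : ∀ w, w ∉ ES S₀ → lvl w < e ∧ upT w ∉ S₀ := by
    intro w hw
    rw [mem_ES] at hw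
    push_neg at hw
    exact ⟨by omega, hw.2⟩
  constructor
  · intro w hw
    obtain ⟨h1, h2⟩ := hnd w hw
    exact nondet_dom (z := w) hk hLD (fun w' hl hS => Or.inr hS)
      (fun c hc _ => Or.inl (le_of_eq hc.symm)) h1 h2
  · intro u hu v hv huv
    obtain ⟨hu1, hu2⟩ := hnd u hu
    obtain ⟨hv1, hv2⟩ := hnd v hv
    exact nondet_distinct (z := u) hk hLD
      (fun w' hl => ⟨fun hw => hw.resolve_left (by omega), Or.inr⟩)
      (fun c hc _ => Or.inl (le_of_eq hc.symm)) hu1 hu2 hv1 hv2 huv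

end KT
namespace KT
variable {k e : ℕ}

lemma nondet_ES_diff {S₀ : Set (KVert k (e + 4))} {z w : KVert k (e + 1)}
    (hw : w ∉ ES S₀ \ {z}) : w = z ∨ (lvl w < e ∧ upT w ∉ S₀) := by
  rcases not_mem_diff_iff.mp hw with h | h
  · exact Or.inl h
  · rw [mem_ES] at h; push_neg at h
    exact Or.inr ⟨by omega, h.2⟩

lemma mem_ES_diff_high {S₀ : Set (KVert k (e + 4))} {z c : KVert k (e + 1)}
    (hc : e ≤ lvl c) (hcz : c ≠ z) : c ∈ ES S₀ \ {z} := ⟨Or.inl hc, hcz⟩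

/-- Removing a leaf of the shallow tree from `ES S₀`. -/
lemma rem_leaf_ES (hk : 2 ≤ k) {S₀ : Set (KVert k (e + 4))}
    (hLD : IsLDSet (karyTree k (e + 4)) S₀) {z : KVert k (e + 1)} (hz : lvl z = e + 1) :
    IsLDSet (karyTree k (e + 1)) (ES S₀ \ {z}) := by
  set T := ES S₀ \ {z} with hTdef
  have hT : ∀ w', lvl w' < e → (w' ∈ T ↔ upT w' ∈ S₀) := by
    intro w' hl
    constructor
    · intro hw'
      exact (hw'.1.resolve_left (by omega))
    · intro hS
      exact ⟨Or.inr hS, fun h => by rw [h] at hl; omega⟩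
  have hTe : ∀ c, lvl c = e → c ≠ z → c ∈ T :=
    fun c hc hcz => mem_ES_diff_high (le_of_eq hc.symm) hcz
  have hTe' : ∀ c, lvl c = e → c ∈ T :=
    fun c hc => hTe c hc (fun h => by rw [h, hz] at hc; omega)
  have hparz : lvl (par z) = e := by have := lvl_par (show 1 ≤ lvl z by omega); omega
  -- the trace of z is contained in pa z
  have htrz : ∀ x, x ∈ (karyTree k (e + 1)).neighborSet z → x ∈ pa z := by
    intro x hx
    rw [neighborSet_eq] at hx
    rcases hx with h | h
    · exfalso; have h1 := lvl_of_mem_ch h; have := lvl_le x; omega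
    · exact h
  -- distinctness of z's trace vs a low non-detector's
  have key : ∀ w, lvl w < e → upT w ∉ S₀ →
      (karyTree k (e + 1)).neighborSet z ∩ T ≠ (karyTree k (e + 1)).neighborSet w ∩ T := by
    intro w hw1 hw2
    by_cases hA : lvl w + 1 = e
    · intro heq
      obtain ⟨c, c', hc, hc', hcc⟩ := exists_two_children hk (show lvl w < e + 1 by omega)
      have hm : ∀ x ∈ ch w, x ∈ (karyTree k (e + 1)).neighborSet z ∩ T := by
        intro x hx
        rw [heq]
        exact ⟨mem_nb_of_ch hx, hTe' x (by rw [lvl_of_mem_ch hx]; omega)⟩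
      exact hcc (pa_subsing (htrz c (hm c hc).1) (htrz c' (hm c' hc').1))
    · apply ne_sets_of_mem (x := par z)
      · exact ⟨par_mem_nb (by omega), hTe' _ hparz⟩
      · intro hmem
        exact not_mem_nb (by omega) (by omega) hmem.1
  constructor
  · intro w hw
    rcases nondet_ES_diff hw with rfl | ⟨h1, h2⟩
    · refine ⟨par w, par_mem_nb (by omega), hTe' _ hparz⟩
    · exact nondet_dom (z := z) hk hLD (fun w' hl hS => (hT w' hl).mpr hS) hTe h1 h2
  · intro u hu v hv huv
    rcases nondet_ES_diff hu with rfl | ⟨hu1, hu2⟩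
    · rcases nondet_ES_diff hv with rfl | ⟨hv1, hv2⟩
      · exact absurd rfl huv
      · exact key v hv1 hv2
    · rcases nondet_ES_diff hv with rfl | ⟨hv1, hv2⟩
      · exact (key u hu1 hu2).symm
      · exact nondet_distinct (z := z) hk hLD hT hTe hu1 hu2 hv1 hv2 huv

/-- Removing a support of the shallow tree from `ES S₀`. -/
lemma rem_sup_ES (hk : 2 ≤ k) {S₀ : Set (KVert k (e + 4))}
    (hLD : IsLDSet (karyTree k (e + 4)) S₀) {z : KVert k (e + 1)} (hz : lvl z = e) :
    IsLDSet (karyTree k (e + 1)) (ES S₀ \ {z}) := by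
  set T := ES S₀ \ {z} with hTdef
  have hT : ∀ w', lvl w' < e → (w' ∈ T ↔ upT w' ∈ S₀) := by
    intro w' hl
    constructor
    · intro hw'
      exact (hw'.1.resolve_left (by omega))
    · intro hS
      exact ⟨Or.inr hS, fun h => by rw [h, hz] at hl; omega⟩
  have hTe : ∀ c, lvl c = e → c ≠ z → c ∈ T :=
    fun c hc hcz => mem_ES_diff_high (le_of_eq hc.symm) hcz
  have key : ∀ w, lvl w < e →
      (karyTree k (e + 1)).neighborSet z ∩ T ≠ (karyTree k (e + 1)).neighborSet w ∩ T := by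
    intro w hw1
    obtain ⟨c, hc, hcz⟩ := exists_child_ne hk (show lvl z < e + 1 by omega) z
    have hcl : lvl c = e + 1 := by rw [lvl_of_mem_ch hc]; omega
    apply ne_sets_of_mem (x := c)
    · exact ⟨mem_nb_of_ch hc, mem_ES_diff_high (by omega) hcz⟩
    · intro hmem
      exact not_mem_nb (by omega) (by omega) hmem.1
  constructor
  · intro w hw
    rcases nondet_ES_diff hw with rfl | ⟨h1, h2⟩
    · exact trace_nonempty_of_ch (z := w) hk (by omega)
        (fun c hc hcz => mem_ES_diff_high (by rw [lvl_of_mem_ch hc]; omega) hcz)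
    · exact nondet_dom (z := z) hk hLD (fun w' hl hS => (hT w' hl).mpr hS) hTe h1 h2
  · intro u hu v hv huv
    rcases nondet_ES_diff hu with rfl | ⟨hu1, hu2⟩
    · rcases nondet_ES_diff hv with rfl | ⟨hv1, hv2⟩
      · exact absurd rfl huv
      · exact key v hv1
    · rcases nondet_ES_diff hv with rfl | ⟨hv1, hv2⟩
      · exact (key u hu1).symm
      · exact nondet_distinct (z := z) hk hLD hT hTe hu1 hu2 hv1 hv2 huv

lemma ES_diff {S₀ : Set (KVert k (e + 4))} {z : KVert k (e + 1)} (hz : lvl z < e) :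
    ES S₀ \ {z} = ES (S₀ \ {upT z}) := by
  ext w
  simp only [ES, Set.mem_diff, Set.mem_setOf_eq, Set.mem_singleton_iff]
  constructor
  · rintro ⟨h | h, hwz⟩
    · exact Or.inl h
    · exact Or.inr ⟨h, fun hc => hwz (upT_inj hc)⟩
  · rintro (h | ⟨h1, h2⟩)
    · exact ⟨Or.inl h, fun hc => by rw [hc] at h; omega⟩
    · exact ⟨Or.inr h1, fun hc => h2 (by rw [hc])⟩

/-- The pulled-back set is RED:LD. -/
lemma redld_ES (hk : 2 ≤ k) {S₀ : Set (KVert k (e + 4))}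
    (hS : IsRedLDSet (karyTree k (e + 4)) S₀) :
    IsRedLDSet (karyTree k (e + 1)) (ES S₀) := by
  refine ⟨core_lower hk hS.1, ?_⟩
  intro z hz
  have hle := lvl_le z
  by_cases h1 : lvl z = e + 1
  · exact rem_leaf_ES hk hS.1 h1
  by_cases h2 : lvl z = e
  · exact rem_sup_ES hk hS.1 h2
  · have h3 : lvl z < e := by omega
    have h4 : upT z ∈ S₀ := by
      rcases (mem_ES.mp hz) with h | h
      · omega
      · exact h
    rw [ES_diff h3]
    exact core_lower hk (hS.2 (upT z) h4)

end KT
namespace KT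
variable {k e : ℕ}

/-- The pushed-forward set on the deeper tree. -/
def SE (E : Set (KVert k (e + 1))) : Set (KVert k (e + 4)) :=
  {v | e + 3 ≤ lvl v ∨ ∃ w ∈ E, upT w = v}

lemma mem_SE {E : Set (KVert k (e + 1))} {v : KVert k (e + 4)} :
    v ∈ SE E ↔ e + 3 ≤ lvl v ∨ ∃ w ∈ E, upT w = v := Iff.rfl

lemma nondet_SE {E : Set (KVert k (e + 1))} {v : KVert k (e + 4)} (hv : v ∉ SE E) :
    lvl v ≤ e + 2 ∧ ∀ w ∈ E, upT w ≠ v := by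
  rw [mem_SE] at hv; push_neg at hv
  exact ⟨by omega, hv.2⟩

lemma up_dom {E : Set (KVert k (e + 1))} (hLD : IsLDSet (karyTree k (e + 1)) E)
    {T : Set (KVert k (e + 4))} (hT : ∀ b ∈ E, upT b ∈ T)
    {v : KVert k (e + 4)} (hv1 : lvl v ≤ e + 1) (hv2 : ∀ w ∈ E, upT w ≠ v) :
    ((karyTree k (e + 4)).neighborSet v ∩ T).Nonempty := by
  obtain ⟨w, rfl⟩ := exists_dn hv1
  obtain ⟨b, hbN, hbE⟩ := hLD.1 w (fun hw => hv2 w hw rfl)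
  exact ⟨upT b, nb_transfer.mpr hbN, hT b hbE⟩

lemma up_bb_incl {E : Set (KVert k (e + 1))}
    {T : Set (KVert k (e + 4))}
    (hT : ∀ x : KVert k (e + 4), lvl x ≤ e + 2 → (x ∈ T ↔ ∃ w ∈ E, upT w = x))
    {u v : KVert k (e + 1)}
    (heq : (karyTree k (e + 4)).neighborSet (upT u) ∩ T =
      (karyTree k (e + 4)).neighborSet (upT v) ∩ T) :
    ∀ b, b ∈ (karyTree k (e + 1)).neighborSet u ∩ E →
      b ∈ (karyTree k (e + 1)).neighborSet v ∩ E := by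
  rintro b ⟨hbN, hbE⟩
  have h1 : upT b ∈ (karyTree k (e + 4)).neighborSet (upT u) ∩ T :=
    ⟨nb_transfer.mpr hbN, (hT (upT b) (by rw [lvl_upT]; have := lvl_le b; omega)).mpr
      ⟨b, hbE, rfl⟩⟩
  rw [heq] at h1
  obtain ⟨w, hwE, hwb⟩ := (hT (upT b) (by rw [lvl_upT]; have := lvl_le b; omega)).mp h1.2
  have : w = b := upT_inj hwb
  subst this
  exact ⟨nb_transfer.mp h1.1, hwE⟩

lemma up_distinct (hk : 2 ≤ k) {E : Set (KVert k (e + 1))}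
    (hLD : IsLDSet (karyTree k (e + 1)) E)
    {T : Set (KVert k (e + 4))} {z : KVert k (e + 4)}
    (hT : ∀ x : KVert k (e + 4), lvl x ≤ e + 2 → (x ∈ T ↔ ∃ w ∈ E, upT w = x))
    (hTe : ∀ c : KVert k (e + 4), lvl c = e + 3 → c ≠ z → c ∈ T)
    {u v : KVert k (e + 4)} (hu1 : lvl u ≤ e + 2) (hu2 : ∀ w ∈ E, upT w ≠ u)
    (hv1 : lvl v ≤ e + 2) (hv2 : ∀ w ∈ E, upT w ≠ v) (huv : u ≠ v) :
    (karyTree k (e + 4)).neighborSet u ∩ T ≠ (karyTree k (e + 4)).neighborSet v ∩ T := by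
  by_cases hA : lvl u = e + 2
  · exact trace_ne_of_children (z := z) hk (by omega) (by omega) huv
      (fun c hc hcz => hTe c (by rw [lvl_of_mem_ch hc]; omega) hcz)
  · by_cases hB : lvl v = e + 2
    · exact (trace_ne_of_children (z := z) hk (by omega) (by omega) huv.symm
        (fun c hc hcz => hTe c (by rw [lvl_of_mem_ch hc]; omega) hcz)).symm
    · intro heq
      obtain ⟨u', rfl⟩ := exists_dn (show lvl u ≤ e + 1 by omega)
      obtain ⟨v', rfl⟩ := exists_dn (show lvl v ≤ e + 1 by omega)
      exact hLD.2 u' (fun h => hu2 u' h rfl) v' (fun h => hv2 v' h rfl)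
        (fun h => huv (by rw [h]))
        (Set.ext fun b => ⟨up_bb_incl hT heq b, up_bb_incl hT heq.symm b⟩)

lemma core_upper (hk : 2 ≤ k) {E : Set (KVert k (e + 1))}
    (hLD : IsLDSet (karyTree k (e + 1)) E) :
    IsLDSet (karyTree k (e + 4)) (SE E) := by
  have hT : ∀ x : KVert k (e + 4), lvl x ≤ e + 2 → (x ∈ SE E ↔ ∃ w ∈ E, upT w = x) :=
    fun x hx => ⟨fun h => h.resolve_left (by omega), Or.inr⟩
  have hTe : ∀ c : KVert k (e + 4), lvl c = e + 3 → c ∈ SE E :=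
    fun c hc => Or.inl (le_of_eq hc.symm)
  constructor
  · intro v hv
    obtain ⟨h1, h2⟩ := nondet_SE hv
    by_cases hA : lvl v = e + 2
    · exact trace_nonempty_of_ch (z := v) hk (by omega)
        (fun c hc _ => hTe c (by rw [lvl_of_mem_ch hc]; omega))
    · exact up_dom hLD (fun b hb => Or.inr ⟨b, hb, rfl⟩) (by omega) h2
  · intro u hu v hv huv
    obtain ⟨hu1, hu2⟩ := nondet_SE hu
    obtain ⟨hv1, hv2⟩ := nondet_SE hv
    exact up_distinct (z := u) hk hLD hT (fun c hc _ => hTe c hc) hu1 hu2 hv1 hv2 huv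

lemma rem_leaf_SE (hk : 2 ≤ k) {E : Set (KVert k (e + 1))}
    (hLD : IsLDSet (karyTree k (e + 1)) E) {z : KVert k (e + 4)} (hz : lvl z = e + 4) :
    IsLDSet (karyTree k (e + 4)) (SE E \ {z}) := by
  set T := SE E \ {z} with hTdef
  have hT : ∀ x : KVert k (e + 4), lvl x ≤ e + 2 → (x ∈ T ↔ ∃ w ∈ E, upT w = x) := by
    intro x hx
    constructor
    · intro h; exact h.1.resolve_left (by omega)
    · intro h; exact ⟨Or.inr h, fun hc => by rw [hc, hz] at hx; omega⟩
  have hTe : ∀ c : KVert k (e + 4), lvl c = e + 3 → c ∈ T := by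
    intro c hc
    exact ⟨Or.inl (le_of_eq hc.symm), fun h => by rw [h, hz] at hc; omega⟩
  have hparz : lvl (par z) = e + 3 := by have := lvl_par (show 1 ≤ lvl z by omega); omega
  have htrz : ∀ x, x ∈ (karyTree k (e + 4)).neighborSet z → x ∈ pa z := by
    intro x hx
    rw [neighborSet_eq] at hx
    rcases hx with h | h
    · exfalso; have h1 := lvl_of_mem_ch h; have := lvl_le x; omega
    · exact h
  have hnd : ∀ v, v ∉ T → v = z ∨ (lvl v ≤ e + 2 ∧ ∀ w ∈ E, upT w ≠ v) := by
    intro v hv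
    rcases not_mem_diff_iff.mp hv with h | h
    · exact Or.inl h
    · exact Or.inr (nondet_SE h)
  have key : ∀ w, lvl w ≤ e + 2 → (∀ b ∈ E, upT b ≠ w) →
      (karyTree k (e + 4)).neighborSet z ∩ T ≠
        (karyTree k (e + 4)).neighborSet w ∩ T := by
    intro w hw1 hw2
    by_cases hA : lvl w = e + 2
    · intro heq
      obtain ⟨c, c', hc, hc', hcc⟩ := exists_two_children hk (show lvl w < e + 4 by omega)
      have hm : ∀ x ∈ ch w, x ∈ (karyTree k (e + 4)).neighborSet z ∩ T := by
        intro x hx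
        rw [heq]
        exact ⟨mem_nb_of_ch hx, hTe x (by rw [lvl_of_mem_ch hx]; omega)⟩
      exact hcc (pa_subsing (htrz c (hm c hc).1) (htrz c' (hm c' hc').1))
    · apply ne_sets_of_mem (x := par z)
      · exact ⟨par_mem_nb (by omega), hTe _ hparz⟩
      · intro hmem
        exact not_mem_nb (by omega) (by omega) hmem.1
  constructor
  · intro v hv
    rcases hnd v hv with rfl | ⟨h1, h2⟩
    · exact ⟨par v, par_mem_nb (by omega), hTe _ hparz⟩
    · by_cases hA : lvl v = e + 2
      · exact trace_nonempty_of_ch (z := z) hk (by omega)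
          (fun c hc hcz => hTe c (by rw [lvl_of_mem_ch hc]; omega))
      · exact up_dom hLD (fun b hb => (hT (upT b)
          (by rw [lvl_upT]; have := lvl_le b; omega)).mpr ⟨b, hb, rfl⟩) (by omega) h2
  · intro u hu v hv huv
    rcases hnd u hu with rfl | ⟨hu1, hu2⟩
    · rcases hnd v hv with rfl | ⟨hv1, hv2⟩
      · exact absurd rfl huv
      · exact key v hv1 hv2
    · rcases hnd v hv with rfl | ⟨hv1, hv2⟩
      · exact (key u hu1 hu2).symm
      · exact up_distinct (z := z) hk hLD hT (fun c hc _ => hTe c hc) hu1 hu2 hv1 hv2 huv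

lemma rem_sup_SE (hk : 2 ≤ k) {E : Set (KVert k (e + 1))}
    (hLD : IsLDSet (karyTree k (e + 1)) E) {z : KVert k (e + 4)} (hz : lvl z = e + 3) :
    IsLDSet (karyTree k (e + 4)) (SE E \ {z}) := by
  set T := SE E \ {z} with hTdef
  have hT : ∀ x : KVert k (e + 4), lvl x ≤ e + 2 → (x ∈ T ↔ ∃ w ∈ E, upT w = x) := by
    intro x hx
    constructor
    · intro h; exact h.1.resolve_left (by omega)
    · intro h; exact ⟨Or.inr h, fun hc => by rw [hc, hz] at hx; omega⟩
  have hTe : ∀ c : KVert k (e + 4), lvl c = e + 3 → c ≠ z → c ∈ T :=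
    fun c hc hcz => ⟨Or.inl (le_of_eq hc.symm), hcz⟩
  have hnd : ∀ v, v ∉ T → v = z ∨ (lvl v ≤ e + 2 ∧ ∀ w ∈ E, upT w ≠ v) := by
    intro v hv
    rcases not_mem_diff_iff.mp hv with h | h
    · exact Or.inl h
    · exact Or.inr (nondet_SE h)
  have key : ∀ w, lvl w ≤ e + 2 →
      (karyTree k (e + 4)).neighborSet z ∩ T ≠
        (karyTree k (e + 4)).neighborSet w ∩ T := by
    intro w hw1
    obtain ⟨c, hc, hcz⟩ := exists_child_ne hk (show lvl z < e + 4 by omega) z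
    have hcl : lvl c = e + 4 := by rw [lvl_of_mem_ch hc]; omega
    apply ne_sets_of_mem (x := c)
    · exact ⟨mem_nb_of_ch hc, ⟨Or.inl (by omega), hcz⟩⟩
    · intro hmem
      exact not_mem_nb (by omega) (by omega) hmem.1
  constructor
  · intro v hv
    rcases hnd v hv with rfl | ⟨h1, h2⟩
    · exact trace_nonempty_of_ch (z := v) hk (by omega)
        (fun c hc hcz => ⟨Or.inl (by rw [lvl_of_mem_ch hc]; omega), hcz⟩)
    · by_cases hA : lvl v = e + 2
      · exact trace_nonempty_of_ch (z := z) hk (by omega)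
          (fun c hc hcz => hTe c (by rw [lvl_of_mem_ch hc]; omega) hcz)
      · exact up_dom hLD (fun b hb => (hT (upT b)
          (by rw [lvl_upT]; have := lvl_le b; omega)).mpr ⟨b, hb, rfl⟩) (by omega) h2
  · intro u hu v hv huv
    rcases hnd u hu with rfl | ⟨hu1, hu2⟩
    · rcases hnd v hv with rfl | ⟨hv1, hv2⟩
      · exact absurd rfl huv
      · exact key v hv1
    · rcases hnd v hv with rfl | ⟨hv1, hv2⟩
      · exact (key u hu1).symm
      · exact up_distinct (z := z) hk hLD hT hTe hu1 hu2 hv1 hv2 huv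

lemma SE_diff {E : Set (KVert k (e + 1))} {w₀ : KVert k (e + 1)} :
    SE E \ {upT w₀} = SE (E \ {w₀}) := by
  ext v
  simp only [SE, Set.mem_diff, Set.mem_setOf_eq, Set.mem_singleton_iff]
  constructor
  · rintro ⟨h | ⟨w, hw, rfl⟩, hvz⟩
    · exact Or.inl h
    · exact Or.inr ⟨w, ⟨hw, fun hc => hvz (by rw [hc])⟩, rfl⟩
  · rintro (h | ⟨w, ⟨hw1, hw2⟩, rfl⟩)
    · refine ⟨Or.inl h, fun hc => ?_⟩
      rw [hc, lvl_upT] at h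
      have := lvl_le w₀; omega
    · exact ⟨Or.inr ⟨w, hw1, rfl⟩, fun hc => hw2 (upT_inj hc)⟩

lemma redld_SE (hk : 2 ≤ k) {E : Set (KVert k (e + 1))}
    (hE : IsRedLDSet (karyTree k (e + 1)) E) :
    IsRedLDSet (karyTree k (e + 4)) (SE E) := by
  refine ⟨core_upper hk hE.1, ?_⟩
  intro z hz
  have hle := lvl_le z
  by_cases h1 : lvl z = e + 4
  · exact rem_leaf_SE hk hE.1 h1
  by_cases h2 : lvl z = e + 3
  · exact rem_sup_SE hk hE.1 h2
  · obtain ⟨w₀, hw₀, rfl⟩ : ∃ w₀ ∈ E, upT w₀ = z := by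
      rcases mem_SE.mp hz with h | h
      · omega
      · exact h
    rw [SE_diff]
    exact core_upper hk (hE.2 w₀ hw₀)

end KT
namespace KT
variable {k e : ℕ}

open Classical in
/-- Key counting: the middle three levels of a RED:LD set have at least
`k^(e+1) + k^e` detectors. -/
lemma middle_count (hk : 2 ≤ k) {S : Set (KVert k (e + 4))}
    (hS : IsRedLDSet (karyTree k (e + 4)) S) :
    k ^ (e + 1) + k ^ e ≤
      (S ∩ {v : KVert k (e + 4) | lvl v = e + 2 ∨ lvl v = e + 1 ∨ lvl v = e}).ncard := by
  -- choice of (first, second) witnesses for each vertex at level e+1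
  have hspec : ∀ c : KVert k (e + 4), lvl c = e + 1 →
      ∃ p : KVert k (e + 4) × KVert k (e + 4),
        ((c ∈ S → p.1 = c) ∧ (c ∉ S → p.1 ∈ ch c ∩ S)) ∧
          (par c ∉ S → (p.2 ∈ ch c ∩ S ∧ p.2 ≠ p.1)) := by
    intro c hc
    by_cases hcS : c ∈ S
    · by_cases hp : par c ∈ S
      · exact ⟨(c, c), ⟨fun _ => rfl, fun h => absurd hcS h⟩, fun h => absurd hp h⟩
      · obtain ⟨y, hy⟩ := child_detector_of_mem hS hcS (by omega) hp
        refine ⟨(c, y), ⟨fun _ => rfl, fun h => absurd hcS h⟩, fun _ => ⟨hy, ?_⟩⟩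
        intro hyc
        have h5 := lvl_of_mem_ch hy.1
        simp only at hyc
        rw [hyc] at h5
        omega
    · by_cases hp : par c ∈ S
      · obtain ⟨y, hy⟩ := child_detector hS hcS
        exact ⟨(y, y), ⟨fun h => absurd h hcS, fun _ => hy⟩, fun h => absurd hp h⟩
      · -- both c and its parent are non-detectors: two children of c in S
        obtain ⟨a, ha, b, hb, hab⟩ := two_neighbors hS hcS
        rw [trace_eq] at ha hb
        have hchS : ∀ x, x ∈ (ch c ∩ S) ∪ (pa c ∩ S) → x ∈ ch c ∩ S := by
          rintro x (hx | hx)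
          · exact hx
          · exfalso
            rw [pa_eq_singleton (by omega : 1 ≤ lvl c)] at hx
            have : x = par c := hx.1
            rw [this] at hx
            exact hp hx.2
        exact ⟨(a, b), ⟨fun h => absurd h hcS, fun _ => hchS a ha⟩,
          fun _ => ⟨hchS b hb, hab.symm⟩⟩
  choose F hF1 hF2 using hspec
  -- the injection
  set f : KVert k (e + 4) → KVert k (e + 4) := fun v =>
    if h1 : lvl v = e + 1 then (F v h1).1
    else if h2 : lvl v = e then
      (if v ∈ S then v else (F (child ⟨0, by omega⟩ v (by omega)) (by
        rw [lvl_of_mem_ch (child_mem _)]; omega)).2)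
    else v with hfdef
  have husedchild : ∀ v : KVert k (e + 4), lvl v = e → ∀ (h : lvl v < e + 4),
      lvl (child (⟨0, by omega⟩ : Fin k) v h) = e + 1 := by
    intro v hv h
    rw [lvl_of_mem_ch (child_mem h)]; omega
  -- basic shape facts about f
  have hshape1 : ∀ v (h1 : lvl v = e + 1), f v = (F v h1).1 := by
    intro v h1
    simp only [hfdef, dif_pos h1]
  have hshape2 : ∀ v, lvl v = e → v ∈ S → f v = v := by
    intro v h2 hvS
    simp only [hfdef, dif_neg (by omega : ¬ lvl v = e + 1), dif_pos h2, if_pos hvS]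
  have hshape3 : ∀ v (h2 : lvl v = e), v ∉ S → f v =
      (F (child ⟨0, by omega⟩ v (by omega)) (by
        rw [lvl_of_mem_ch (child_mem _)]; omega)).2 := by
    intro v h2 hvS
    simp only [hfdef, dif_neg (by omega : ¬ lvl v = e + 1), dif_pos h2, if_neg hvS]
  -- at level e+1: f v ∈ S and (f v = v or f v ∈ ch v)
  have hprop1 : ∀ v (h1 : lvl v = e + 1), f v ∈ S ∧ (f v = v ∨ f v ∈ ch v) := by
    intro v h1
    rw [hshape1 v h1]
    by_cases hvS : v ∈ S
    · rw [(hF1 v h1).1 hvS]; exact ⟨hvS, Or.inl rfl⟩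
    · have := (hF1 v h1).2 hvS
      exact ⟨this.2, Or.inr this.1⟩
  -- at level e not in S: f v ∈ S ∩ grandchildren through child 0
  have hprop2 : ∀ v (h2 : lvl v = e), v ∉ S →
      f v ∈ ch (child ⟨0, by omega⟩ v (by omega : lvl v < e + 4)) ∩ S := by
    intro v h2 hvS
    rw [hshape3 v h2 hvS]
    set c := child (⟨0, by omega⟩ : Fin k) v (by omega : lvl v < e + 4)
    have hc1 : lvl c = e + 1 := husedchild v h2 _
    have hpc : par c ∉ S := by
      rw [par_of_mem_ch (child_mem _)]
      exact hvS
    exact (hF2 c hc1 hpc).1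
  -- MapsTo
  have hmaps : ∀ v ∈ (Lv k (e+4) (e+1) ∪ Lv k (e+4) e),
      f v ∈ S ∩ {v : KVert k (e + 4) | lvl v = e + 2 ∨ lvl v = e + 1 ∨ lvl v = e} := by
    rintro v (hv | hv)
    · have h1 : lvl v = e + 1 := hv
      obtain ⟨hfS, hfc⟩ := hprop1 v h1
      refine ⟨hfS, ?_⟩
      rcases hfc with h | h
      · rw [h]; exact Or.inr (Or.inl h1)
      · exact Or.inl (by rw [lvl_of_mem_ch h]; omega)
    · have h2 : lvl v = e := hv
      by_cases hvS : v ∈ S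
      · rw [hshape2 v h2 hvS]
        exact ⟨hvS, Or.inr (Or.inr h2)⟩
      · have := hprop2 v h2 hvS
        refine ⟨this.2, Or.inl ?_⟩
        rw [lvl_of_mem_ch this.1, husedchild v h2 _]
  -- injectivity
  have hinj : Set.InjOn f (Lv k (e+4) (e+1) ∪ Lv k (e+4) e) := by
    have lvlf : ∀ v (h1 : lvl v = e + 1), lvl (f v) = e + 1 ∨ f v ∈ ch v := by
      intro v h1
      rcases (hprop1 v h1).2 with h | h
      · rw [h]; exact Or.inl h1
      · exact Or.inr h
    rintro a (ha | ha) b (hb | hb) hfab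
    · -- both at level e+1
      by_contra hab
      rcases (hprop1 a ha).2 with h1 | h1 <;> rcases (hprop1 b hb).2 with h2 | h2
      · exact hab (h1 ▸ h2 ▸ hfab ▸ rfl)
      · rw [h1] at hfab
        have := lvl_of_mem_ch h2
        rw [← hfab] at this
        have h3 : lvl a = e + 1 := ha
        have h4 : lvl b = e + 1 := hb
        omega
      · rw [h2] at hfab
        have := lvl_of_mem_ch h1
        rw [hfab] at this
        have h3 : lvl a = e + 1 := ha
        have h4 : lvl b = e + 1 := hb
        omega
      · exact hab (ch_disj (hfab ▸ h1) h2)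
    · -- a at e+1, b at e
      by_contra hab
      have h2 : lvl b = e := hb
      by_cases hbS : b ∈ S
      · rw [hshape2 b h2 hbS] at hfab
        rcases lvlf a ha with h | h
        · rw [hfab] at h; have : lvl a = e + 1 := ha; omega
        · rw [hfab] at h
          have := lvl_of_mem_ch h
          have h3 : lvl a = e + 1 := ha
          omega
      · -- f b is a grandchild of b through c0 := child 0 b; f a ∈ {a} ∪ ch a
        set c0 := child (⟨0, by omega⟩ : Fin k) b (by omega : lvl b < e + 4) with hc0
        have hgc := hprop2 b h2 hbS
        rcases (hprop1 a ha).2 with h | h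
        · -- f a = a at lvl e+1, f b at lvl e+2
          rw [h] at hfab
          have := lvl_of_mem_ch hgc.1
          have h3 : lvl a = e + 1 := ha
          rw [husedchild b h2 _] at this
          rw [hfab] at h3
          omega
        · -- f a ∈ ch a and f b ∈ ch c0 : then a = c0
          have hac0 : a = c0 := ch_disj (hfab ▸ h) hgc.1
          -- then f b = (F c0).2 ≠ (F c0).1 = f a
          have hpar : par c0 ∉ S := by
            rw [par_of_mem_ch (child_mem _)]
            exact hbS
          have hne := (hF2 c0 (husedchild b h2 _) hpar).2
          -- f b = (F c0 _).2 and f a = (F a _).1 = (F c0 _).1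
          have hfb : f b = (F c0 (husedchild b h2 _)).2 := hshape3 b h2 hbS
          have hfa : f a = (F c0 (husedchild b h2 _)).1 := by
            rw [hshape1 a ha]
            subst hac0
            rfl
          rw [hfb, hfa] at hfab
          first | exact hne hfab | first | exact hne hfab | exact hne hfab.symm
    · -- a at e, b at e+1 : symmetric
      by_contra hab
      have h2 : lvl a = e := ha
      by_cases haS : a ∈ S
      · rw [hshape2 a h2 haS] at hfab
        rcases lvlf b hb with h | h
        · rw [← hfab] at h; have : lvl a = e := ha; omega
        · rw [← hfab] at h
          have := lvl_of_mem_ch h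
          have h3 : lvl b = e + 1 := hb
          omega
      · set c0 := child (⟨0, by omega⟩ : Fin k) a (by omega : lvl a < e + 4) with hc0
        have hgc := hprop2 a h2 haS
        rcases (hprop1 b hb).2 with h | h
        · rw [h] at hfab
          have := lvl_of_mem_ch hgc.1
          have h3 : lvl b = e + 1 := hb
          rw [husedchild a h2 _] at this
          rw [← hfab] at h3
          omega
        · have hbc0 : b = c0 := ch_disj (hfab.symm ▸ h) hgc.1
          have hpar : par c0 ∉ S := by
            rw [par_of_mem_ch (child_mem _)]
            exact haS
          have hne := (hF2 c0 (husedchild a h2 _) hpar).2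
          have hfa : f a = (F c0 (husedchild a h2 _)).2 := hshape3 a h2 haS
          have hfb : f b = (F c0 (husedchild a h2 _)).1 := by
            rw [hshape1 b hb]
            subst hbc0
            rfl
          rw [hfb, hfa] at hfab
          first | exact hne hfab | exact hne hfab.symm
    · -- both at level e
      by_contra hab
      have h2a : lvl a = e := ha
      have h2b : lvl b = e := hb
      by_cases haS : a ∈ S <;> by_cases hbS : b ∈ S
      · rw [hshape2 a h2a haS, hshape2 b h2b hbS] at hfab; exact hab hfab
      · rw [hshape2 a h2a haS] at hfab
        have := lvl_of_mem_ch (hprop2 b h2b hbS).1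
        rw [← hfab] at this
        rw [husedchild b h2b _] at this
        omega
      · rw [hshape2 b h2b hbS] at hfab
        have := lvl_of_mem_ch (hprop2 a h2a haS).1
        rw [hfab] at this
        rw [husedchild a h2a _] at this
        omega
      · have hga := (hprop2 a h2a haS).1
        have hgb := (hprop2 b h2b hbS).1
        have hcc : child (⟨0, by omega⟩ : Fin k) a (by omega : lvl a < e + 4) =
            child (⟨0, by omega⟩ : Fin k) b (by omega : lvl b < e + 4) :=
          ch_disj (hfab ▸ hga) hgb
        have : a = b := by
          have h1 := par_of_mem_ch (child_mem (by omega : lvl a < e + 4)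
            (x := (⟨0, by omega⟩ : Fin k)))
          have h2 := par_of_mem_ch (child_mem (by omega : lvl b < e + 4)
            (x := (⟨0, by omega⟩ : Fin k)))
          rw [← h1, ← h2, hcc]
        exact hab this
  -- conclude
  have hcard := Set.ncard_le_ncard_of_injOn f hmaps hinj (Set.toFinite _)
  have hsplit : (Lv k (e+4) (e+1) ∪ Lv k (e+4) e).ncard = k ^ (e+1) + k ^ e := by
    rw [Set.ncard_union_eq ?_ (Set.toFinite _) (Set.toFinite _),
      ncard_Lv (by omega), ncard_Lv (by omega)]
    rw [Set.disjoint_iff]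
    rintro v ⟨h1, h2⟩
    have ha : lvl v = e + 1 := h1
    have hb : lvl v = e := h2
    omega
  omega

end KT
namespace KT
variable {k e : ℕ}

lemma upT_injective : Function.Injective (upT : KVert k (e + 1) → KVert k (e + 4)) :=
  fun _ _ h => upT_inj h

lemma ncard_SE (E : Set (KVert k (e + 1))) :
    (SE E).ncard = k ^ (e + 4) + k ^ (e + 3) + E.ncard := by
  have hsplit : SE E = Lv k (e+4) (e+4) ∪ (Lv k (e+4) (e+3) ∪ upT '' E) := by
    ext v
    simp only [mem_SE, Lv, Set.mem_union, Set.mem_setOf_eq, Set.mem_image]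
    have := lvl_le v
    constructor
    · rintro (h | ⟨w, hw, rfl⟩)
      · by_cases h4 : lvl v = e + 4
        · exact Or.inl h4
        · exact Or.inr (Or.inl (by omega))
      · exact Or.inr (Or.inr ⟨w, hw, rfl⟩)
    · rintro (h | h | ⟨w, hw, rfl⟩)
      · exact Or.inl (by omega)
      · exact Or.inl (by omega)
      · exact Or.inr ⟨w, hw, rfl⟩
  have hd1 : Disjoint (Lv k (e+4) (e+3)) (upT '' E) := by
    rw [Set.disjoint_iff]
    rintro v ⟨h1, w, hw, rfl⟩
    have h2 : lvl (upT w) = e + 3 := h1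
    rw [lvl_upT] at h2
    have := lvl_le w
    omega
  have hd2 : Disjoint (Lv k (e+4) (e+4)) (Lv k (e+4) (e+3) ∪ upT '' E) := by
    rw [Set.disjoint_iff]
    rintro v ⟨h1, h2⟩
    have h3 : lvl v = e + 4 := h1
    rcases h2 with h | ⟨w, hw, rfl⟩
    · have h4 : lvl v = e + 3 := h; omega
    · rw [lvl_upT] at h3; have := lvl_le w; omega
  rw [hsplit, Set.ncard_union_eq hd2 (Set.toFinite _) (Set.toFinite _),
    Set.ncard_union_eq hd1 (Set.toFinite _) (Set.toFinite _),
    Set.ncard_image_of_injective E upT_injective,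
    ncard_Lv (by omega), ncard_Lv (by omega)]
  omega

lemma ncard_ES (S : Set (KVert k (e + 4))) :
    (ES S).ncard = k ^ (e + 1) + k ^ e + (S ∩ {v | lvl v < e}).ncard := by
  set LOW : Set (KVert k (e+1)) := {w | lvl w < e ∧ upT w ∈ S} with hLOW
  have hsplit : ES S = Lv k (e+1) (e+1) ∪ (Lv k (e+1) e ∪ LOW) := by
    ext w
    simp only [mem_ES, Lv, hLOW, Set.mem_union, Set.mem_setOf_eq]
    have := lvl_le w
    constructor
    · rintro (h | h)
      · by_cases h1 : lvl w = e + 1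
        · exact Or.inl h1
        · exact Or.inr (Or.inl (by omega))
      · by_cases h2 : e ≤ lvl w
        · by_cases h1 : lvl w = e + 1
          · exact Or.inl h1
          · exact Or.inr (Or.inl (by omega))
        · exact Or.inr (Or.inr ⟨by omega, h⟩)
    · rintro (h | h | ⟨h1, h2⟩)
      · exact Or.inl (by omega)
      · exact Or.inl (by omega)
      · exact Or.inr h2
  have himg : S ∩ {v | lvl v < e} = upT '' LOW := by
    ext v
    simp only [Set.mem_inter_iff, Set.mem_setOf_eq, Set.mem_image, hLOW]
    constructor
    · rintro ⟨h1, h2⟩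
      obtain ⟨w, rfl⟩ := exists_dn (show lvl v ≤ e + 1 by omega)
      rw [lvl_upT] at h2
      exact ⟨w, ⟨h2, h1⟩, rfl⟩
    · rintro ⟨w, ⟨h1, h2⟩, rfl⟩
      rw [lvl_upT]
      exact ⟨h2, h1⟩
  have hd1 : Disjoint (Lv k (e+1) e) LOW := by
    rw [Set.disjoint_iff]
    rintro w ⟨h1, h2, -⟩
    have h3 : lvl w = e := h1
    omega
  have hd2 : Disjoint (Lv k (e+1) (e+1)) (Lv k (e+1) e ∪ LOW) := by
    rw [Set.disjoint_iff]
    rintro w ⟨h1, h2⟩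
    have h3 : lvl w = e + 1 := h1
    rcases h2 with h | ⟨h, -⟩
    · have h4 : lvl w = e := h; omega
    · omega
  rw [hsplit, Set.ncard_union_eq hd2 (Set.toFinite _) (Set.toFinite _),
    Set.ncard_union_eq hd1 (Set.toFinite _) (Set.toFinite _),
    ncard_Lv (by omega), ncard_Lv (by omega), himg,
    Set.ncard_image_of_injective LOW upT_injective]
  omega

/-- Decomposition of the cardinality of a RED:LD set of the deep tree. -/
lemma lower_step (hk : 2 ≤ k) {S : Set (KVert k (e + 4))}
    (hS : IsRedLDSet (karyTree k (e + 4)) S) :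
    (ES S).ncard + k ^ (e + 4) + k ^ (e + 3) ≤ S.ncard := by
  set MID : Set (KVert k (e+4)) := {v | lvl v = e + 2 ∨ lvl v = e + 1 ∨ lvl v = e}
    with hMID
  have hsplit : S = (S ∩ Lv k (e+4) (e+4)) ∪ ((S ∩ Lv k (e+4) (e+3)) ∪
      ((S ∩ MID) ∪ (S ∩ {v | lvl v < e}))) := by
    ext v
    simp only [Set.mem_union, Set.mem_inter_iff, Lv, hMID, Set.mem_setOf_eq]
    have := lvl_le v
    constructor
    · intro hv
      by_cases h1 : lvl v = e + 4
      · exact Or.inl ⟨hv, h1⟩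
      by_cases h2 : lvl v = e + 3
      · exact Or.inr (Or.inl ⟨hv, h2⟩)
      by_cases h3 : lvl v < e
      · exact Or.inr (Or.inr (Or.inr ⟨hv, h3⟩))
      · exact Or.inr (Or.inr (Or.inl ⟨hv, by omega⟩))
    · rintro (⟨hv, -⟩ | ⟨hv, -⟩ | ⟨hv, -⟩ | ⟨hv, -⟩) <;> exact hv
  have hda : Disjoint (S ∩ MID) (S ∩ {v : KVert k (e+4) | lvl v < e}) := by
    rw [Set.disjoint_iff]
    rintro v ⟨⟨-, h1⟩, -, h2⟩
    simp only [hMID, Set.mem_setOf_eq] at h1 h2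
    omega
  have hdb : Disjoint (S ∩ Lv k (e+4) (e+3))
      ((S ∩ MID) ∪ (S ∩ {v : KVert k (e+4) | lvl v < e})) := by
    rw [Set.disjoint_iff]
    rintro v ⟨⟨-, h1⟩, h2⟩
    have h3 : lvl v = e + 3 := h1
    rcases h2 with ⟨-, h⟩ | ⟨-, h⟩ <;> simp only [hMID, Set.mem_setOf_eq] at h <;> omega
  have hdc : Disjoint (S ∩ Lv k (e+4) (e+4)) ((S ∩ Lv k (e+4) (e+3)) ∪
      ((S ∩ MID) ∪ (S ∩ {v : KVert k (e+4) | lvl v < e}))) := by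
    rw [Set.disjoint_iff]
    rintro v ⟨⟨-, h1⟩, h2⟩
    have h3 : lvl v = e + 4 := h1
    rcases h2 with ⟨-, h⟩ | ⟨-, h⟩ | ⟨-, h⟩ <;>
      simp only [hMID, Lv, Set.mem_setOf_eq] at h <;> omega
  have hcard : S.ncard = (S ∩ Lv k (e+4) (e+4)).ncard + (S ∩ Lv k (e+4) (e+3)).ncard +
      (S ∩ MID).ncard + (S ∩ {v | lvl v < e}).ncard := by
    conv_lhs => rw [hsplit]
    rw [Set.ncard_union_eq hdc (Set.toFinite _) (Set.toFinite _),
      Set.ncard_union_eq hdb (Set.toFinite _) (Set.toFinite _),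
      Set.ncard_union_eq hda (Set.toFinite _) (Set.toFinite _)]
    omega
  have hf1 : S ∩ Lv k (e+4) (e+4) = Lv k (e+4) (e+4) := by
    apply Set.inter_eq_self_of_subset_right
    intro v hv
    exact bottom_mem (by omega) hS hv
  have hf2 : S ∩ Lv k (e+4) (e+3) = Lv k (e+4) (e+3) := by
    apply Set.inter_eq_self_of_subset_right
    intro v hv
    exact support_mem (by omega) (by omega) hS (by have : lvl v = e + 3 := hv; omega)
  have hmid := middle_count hk hS
  rw [← hMID] at hmid
  rw [hcard, hf1, hf2, ncard_Lv (by omega), ncard_Lv (by omega), ncard_ES]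
  omega

/-- The recursion step. -/
lemma case_rec (hk : 2 ≤ k) (m : ℕ) (hm : IsLeast (redldCards k (e + 1)) m) :
    IsLeast (redldCards k (e + 4)) (m + k ^ (e + 4) + k ^ (e + 3)) := by
  constructor
  · obtain ⟨E, hE, hEcard⟩ := hm.1
    exact ⟨SE E, redld_SE hk hE, by rw [ncard_SE, hEcard]; omega⟩
  · rintro n ⟨S, hS, rfl⟩
    have h1 : m ≤ (ES S).ncard := hm.2 ⟨ES S, redld_ES hk hS, rfl⟩
    have h2 := lower_step hk hS
    omega

end KT
theorem stmt19 (k d : ℕ) (hk : 2 ≤ k) (hd : 1 ≤ d) :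
    (d = 1 → IsLeast (redldCards k 1) (k + 1)) ∧
    (d = 2 → IsLeast (redldCards k 2) (k ^ 2 + k)) ∧
    (d = 3 → IsLeast (redldCards k 3) (k ^ 3 + k ^ 2 + 2)) ∧
    (4 ≤ d → ∀ m : ℕ, IsLeast (redldCards k (d - 3)) m →
      IsLeast (redldCards k d) (m + k ^ d + k ^ (d - 1))) := by
  refine ⟨fun _ => KT.case_d1 hk, fun _ => KT.case_d2 hk, fun _ => KT.case_d3 hk, ?_⟩
  intro hd4 m hm
  obtain ⟨e, rfl⟩ : ∃ e, d = e + 4 := ⟨d - 4, by omega⟩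
  have h1 : e + 4 - 3 = e + 1 := by omega
  have h2 : e + 4 - 1 = e + 3 := by omega
  rw [h1] at hm
  rw [h2]
  exact KT.case_rec hk m hm
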